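/- Let β > 0, γ = β, ε ∈ (0,1), q > 1. Define d_k(u) = (k/((ln u)(ln ln u)^{1/β}))^{1/β}, δ₁(u) = (1/(2 ln u − q ln ln u))^{1/β}, and M_ε(u) = max{k ∈ ℕ : d_k(u) ≤ (1−ε)δ₁(u)}. Then (ln u)^{1/β} · d_{M_ε(u)+1}(u) → (1−ε)·2^{−1/β} as u → ∞. -/

import Mathlib

open Filter

noncomputable def dk (β u : ℝ) (k : ℕ) : ℝ :=
  ((k : ℝ) / (Real.log u * Real.log (Real.log u) ^ (1 / β))) ^ (1 / β)

noncomputable def delta1 (γ q u : ℝ) : ℝ :=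
  (1 / (2 * Real.log u - q * Real.log (Real.log u))) ^ (1 / γ)

theorem log_dM_tendsto (β ε q : ℝ) (hβ : 0 < β) (hε0 : 0 < ε) (hε1 : ε < 1) (hq : 1 < q)
    (M : ℝ → ℕ)
    (hM : ∀ᶠ u in atTop,
      IsGreatest {k : ℕ | dk β u k ≤ (1 - ε) * delta1 β q u} (M u)) :
    Tendsto (fun u : ℝ => Real.log u ^ (1 / β) * dk β u (M u + 1)) atTop
      (nhds ((1 - ε) * 2 ^ (-(1 / β)))) := by
  set c : ℝ := 1 - ε with hc
  have hc0 : 0 < c := by linarith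
  set b : ℝ := 1 / β with hb
  have hb0 : 0 < b := by positivity
  set L : ℝ → ℝ := fun u => Real.log u with hL
  set LL : ℝ → ℝ := fun u => Real.log (Real.log u) with hLL
  -- cβ := c ^ β (rpow)
  set cβ : ℝ := c ^ β with hcβ
  have hcβ0 : 0 < cβ := Real.rpow_pos_of_pos hc0 β
  have hcβb : cβ ^ b = c := by
    rw [hcβ, ← Real.rpow_mul hc0.le, hb, mul_one_div_cancel hβ.ne', Real.rpow_one]
  -- log log u / log u → 0
  have hLtop : Tendsto L atTop atTop := Real.tendsto_log_atTop
  have hLLtop : Tendsto LL atTop atTop := Real.tendsto_log_atTop.comp hLtop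
  have hr : Tendsto (fun u => LL u / L u) atTop (nhds 0) := by
    have := Real.isLittleO_log_id_atTop.tendsto_div_nhds_zero
    exact (this.comp hLtop)
  -- eventual positivity facts
  have hev : ∀ᶠ u in atTop, 1 < L u ∧ 0 < LL u ∧ q * LL u < L u := by
    have h1 : ∀ᶠ u in atTop, 1 < L u := hLtop.eventually_gt_atTop 1
    have h2 : ∀ᶠ u in atTop, 0 < LL u := hLLtop.eventually_gt_atTop 0
    have h3 : ∀ᶠ u in atTop, q * (LL u / L u) < 1 := by
      have := (hr.const_mul q).eventually (gt_mem_nhds (by norm_num : (q:ℝ)*0 < 1))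
      simpa using this
    filter_upwards [h1, h2, h3] with u hu1 hu2 hu3
    refine ⟨hu1, hu2, ?_⟩
    have hLpos : 0 < L u := lt_trans one_pos hu1
    calc q * LL u = q * (LL u / L u) * L u := by field_simp
    _ < 1 * L u := by exact mul_lt_mul_of_pos_right hu3 hLpos
    _ = L u := one_mul _
  -- key bounds on M
  have hkey : ∀ᶠ u in atTop,
      (M u : ℝ) ≤ cβ * (L u * LL u ^ b) / (2 * L u - q * LL u) ∧
      cβ * (L u * LL u ^ b) / (2 * L u - q * LL u) < (M u : ℝ) + 1 := by
    filter_upwards [hM, hev] with u hMu ⟨hu1, hu2, hu3⟩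
    have hLpos : 0 < L u := lt_trans one_pos hu1
    have hLLp : 0 < LL u ^ b := Real.rpow_pos_of_pos hu2 b
    have hD : 0 < 2 * L u - q * LL u := by linarith
    set A : ℝ := cβ * (L u * LL u ^ b) / (2 * L u - q * LL u) with hA
    have hiff : ∀ k : ℕ, dk β u k ≤ c * delta1 β q u ↔ (k : ℝ) ≤ A := by
      intro k
      have hrhs : c * delta1 β q u = (cβ / (2 * L u - q * LL u)) ^ b := by
        rw [delta1, ← hcβb, ← Real.mul_rpow hcβ0.le (by positivity), hb]
        congr 1
        field_simp
        exact div_self hD.ne'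
      rw [dk, hrhs, hb]
      rw [Real.rpow_le_rpow_iff (by positivity) (by positivity) hb0]
      rw [div_le_div_iff₀ (by positivity) hD, hA, le_div_iff₀ hD]
    constructor
    · exact (hiff (M u)).mp hMu.1
    · by_contra h
      push_neg at h
      have : (M u + 1 : ℕ) ∈ {k : ℕ | dk β u k ≤ c * delta1 β q u} := by
        rw [Set.mem_setOf_eq, hiff]
        push_cast
        linarith
      have := hMu.2 this
      omega
  -- g u := (M u + 1)/ LL^b → cβ / 2
  have hAr : Tendsto (fun u => cβ / (2 - q * (LL u / L u))) atTop (nhds (cβ / 2)) := by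
    have h2 : Tendsto (fun u => 2 - q * (LL u / L u)) atTop (nhds 2) := by
      have := (tendsto_const_nhds (x := (2:ℝ)) (f := atTop)).sub (hr.const_mul q)
      simpa using this
    exact tendsto_const_nhds.div h2 (by norm_num)
  have hinv : Tendsto (fun u => 1 / LL u ^ b) atTop (nhds 0) := by
    have : Tendsto (fun u => LL u ^ b) atTop atTop :=
      (tendsto_rpow_atTop hb0).comp hLLtop
    simp only [one_div]
    exact this.inv_tendsto_atTop
  have hAeq : ∀ᶠ u in atTop,
      cβ * (L u * LL u ^ b) / (2 * L u - q * LL u) / LL u ^ b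
        = cβ / (2 - q * (LL u / L u)) := by
    filter_upwards [hev] with u ⟨hu1, hu2, hu3⟩
    have hLpos : 0 < L u := lt_trans one_pos hu1
    have hLLp : 0 < LL u ^ b := Real.rpow_pos_of_pos hu2 b
    have hD : 0 < 2 * L u - q * LL u := by linarith
    have h1 : q * (LL u / L u) < 1 := by
      rw [mul_div_assoc']; exact (div_lt_one hLpos).mpr hu3
    rw [div_div, div_eq_div_iff (by positivity) (by linarith)]
    field_simp
  have hg : Tendsto (fun u => ((M u : ℝ) + 1) / LL u ^ b) atTop (nhds (cβ / 2)) := by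
    have hlow : Tendsto (fun u => cβ / (2 - q * (LL u / L u))) atTop (nhds (cβ / 2)) := hAr
    have hup : Tendsto (fun u => cβ / (2 - q * (LL u / L u)) + 1 / LL u ^ b) atTop
        (nhds (cβ / 2)) := by simpa using hAr.add hinv
    refine tendsto_of_tendsto_of_tendsto_of_le_of_le' hlow hup ?_ ?_
    · filter_upwards [hkey, hev, hAeq] with u ⟨h1, h2⟩ ⟨hu1, hu2, hu3⟩ hAe
      have hLLp : 0 < LL u ^ b := Real.rpow_pos_of_pos hu2 b
      rw [← hAe]
      gcongr
    · filter_upwards [hkey, hev, hAeq] with u ⟨h1, h2⟩ ⟨hu1, hu2, hu3⟩ hAe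
      have hLLp : 0 < LL u ^ b := Real.rpow_pos_of_pos hu2 b
      rw [← hAe, ← add_div]
      gcongr
      
  -- final
  have hcont : ContinuousAt (fun x : ℝ => x ^ b) (cβ / 2) :=
    (Real.continuousAt_rpow_const _ b (Or.inl (by positivity)))
  have hfinal : Tendsto (fun u => (((M u : ℝ) + 1) / LL u ^ b) ^ b) atTop
      (nhds ((cβ / 2) ^ b)) := hcont.tendsto.comp hg
  have hval : (cβ / 2) ^ b = c * 2 ^ (-b) := by
    rw [Real.div_rpow hcβ0.le (by norm_num), hcβb, Real.rpow_neg (by norm_num)]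
    rw [div_eq_mul_inv]
  rw [← hval]
  refine hfinal.congr' ?_
  filter_upwards [hev] with u ⟨hu1, hu2, hu3⟩
  have hLpos : 0 < L u := lt_trans one_pos hu1
  have hLLp : 0 < LL u ^ b := Real.rpow_pos_of_pos hu2 b
  have hLpos' : 0 < Real.log u := hLpos
  have hLLp' : 0 < Real.log (Real.log u) ^ b := hLLp
  rw [dk, ← hb]
  rw [← Real.mul_rpow hLpos'.le
    (div_nonneg (Nat.cast_nonneg _) (mul_nonneg hLpos'.le hLLp'.le))]
  congr 1
  push_cast
  field_simp
  ring
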